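/- The last primal iterate of Algorithm (DG) converges sublinearly at rate O(1/√k): for all k ≥ 1, ‖u^k − u*‖ ≤ √(8 L_G R_d² / (k σ_f)), dist_K(G u^k + g) ≤ 3 L_G R_d / √k, and |f(u^k) − f*| ≤ (6 R_d + 3 ‖x^0‖) L_G R_d / √k. -/

import Mathlib

open scoped RealInnerProductSpace

private lemma aux_nonpos {a b : ℝ} (hb : 0 ≤ b) (h : ∀ t : ℝ, 0 < t → t ≤ 1 → a ≤ t * b) :
    a ≤ 0 := by
  rcases eq_or_lt_of_le hb with hb0 | hb0
  · have h1 := h 1 one_pos le_rfl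
    nlinarith
  · by_contra hc
    push_neg at hc
    have ht : 0 < min 1 (a / (2 * b)) := lt_min one_pos (by positivity)
    have h1 := h _ ht (min_le_left _ _)
    have h2 : min 1 (a / (2 * b)) * b ≤ a / (2 * b) * b :=
      mul_le_mul_of_nonneg_right (min_le_right _ _) hb
    have h3 : a / (2 * b) * b = a / 2 := by field_simp
    linarith

private lemma aux_quad {σ Lq Gn t1 t2 : ℝ} (hσ : 0 < σ) (hL : Lq * σ = Gn ^ 2) :
    0 ≤ σ / 2 * t1 ^ 2 - t2 * (Gn * t1) + Lq / 2 * t2 ^ 2 := by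
  nlinarith [sq_nonneg (σ * t1 - Gn * t2), mul_pos hσ hσ]

private lemma aux_sq_le {a b : ℝ} (hb : 0 ≤ b) (h : a ^ 2 ≤ b ^ 2) : a ≤ b := by
  nlinarith

set_option maxHeartbeats 2000000 in
theorem stmt_5 {n p : ℕ}
    (f : EuclideanSpace ℝ (Fin n) → ℝ) (σf : ℝ) (hσf : 0 < σf)
    (hfc : Continuous f) (hfsc : StrongConvexOn Set.univ σf f)
    (U : Set (EuclideanSpace ℝ (Fin n))) (hUne : U.Nonempty) (hUcl : IsClosed U) (hUcv : Convex ℝ U)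
    (G : EuclideanSpace ℝ (Fin n) →L[ℝ] EuclideanSpace ℝ (Fin p)) (hG : G ≠ 0) (g : EuclideanSpace ℝ (Fin p))
    (K : Set (EuclideanSpace ℝ (Fin p))) (hKne : K.Nonempty) (hKcl : IsClosed K) (hKcv : Convex ℝ K)
    (hKcone : ∀ c : ℝ, 0 ≤ c → ∀ v ∈ K, c • v ∈ K)
    (Kstar : Set (EuclideanSpace ℝ (Fin p)))
    (hKstar : Kstar = {x : EuclideanSpace ℝ (Fin p) | ∀ v ∈ K, 0 ≤ ⟪x, v⟫})
    (Lag : EuclideanSpace ℝ (Fin n) → EuclideanSpace ℝ (Fin p) → ℝ)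
    (hLag : ∀ u x, Lag u x = f u + ⟪x, -(G u) - g⟫)
    (uu : EuclideanSpace ℝ (Fin p) → EuclideanSpace ℝ (Fin n))
    (huu : ∀ x : EuclideanSpace ℝ (Fin p), uu x ∈ U ∧ ∀ u ∈ U, Lag (uu x) x ≤ Lag u x)
    (d : EuclideanSpace ℝ (Fin p) → ℝ) (hd : ∀ x, d x = Lag (uu x) x)
    (ustar : EuclideanSpace ℝ (Fin n))
    (hustar : ustar ∈ U ∧ G ustar + g ∈ K ∧ ∀ u ∈ U, G u + g ∈ K → f ustar ≤ f u)
    (fstar : ℝ) (hfstar : fstar = f ustar)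
    (Xstar : Set (EuclideanSpace ℝ (Fin p))) (hXstar : Xstar = {x ∈ Kstar | d x = fstar})
    (hXne : Xstar.Nonempty)
    (Ld : ℝ) (hLd : Ld = ‖G‖ ^ 2 / σf)
    (projKs : EuclideanSpace ℝ (Fin p) → EuclideanSpace ℝ (Fin p))
    (hprojKs : ∀ z : EuclideanSpace ℝ (Fin p), projKs z ∈ Kstar ∧ ∀ w ∈ Kstar, ‖z - projKs z‖ ≤ ‖z - w‖)
    (LG : ℝ) (hLG : Ld ≤ LG) (α : ℕ → ℝ)
    (hα : ∀ k, 1 / LG ≤ α k ∧ α k ≤ 1 / Ld)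
    (x : ℕ → EuclideanSpace ℝ (Fin p)) (hx0K : x 0 ∈ Kstar)
    (hxrec : ∀ k, x (k + 1) = projKs (x k + α k • (-(G (uu (x k))) - g)))
    (xstar : EuclideanSpace ℝ (Fin p)) (hxstar : xstar ∈ Xstar)
    (hxstarmin : ∀ z ∈ Xstar, ‖x 0 - xstar‖ ≤ ‖x 0 - z‖)
    (Rd : ℝ) (hRd : Rd = ‖x 0 - xstar‖)
 :
    ∀ k : ℕ, 1 ≤ k →
      ‖uu (x k) - ustar‖ ≤ Real.sqrt (8 * LG * Rd ^ 2 / ((k : ℝ) * σf)) ∧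
      Metric.infDist (G (uu (x k)) + g) K ≤ 3 * LG * Rd / Real.sqrt (k : ℝ) ∧
      |f (uu (x k)) - fstar| ≤ (6 * Rd + 3 * ‖x 0‖) * LG * Rd / Real.sqrt (k : ℝ) := by
  -- basic positivity
  have hGn : (0:ℝ) < ‖G‖ := norm_pos_iff.mpr hG
  have hLd0 : 0 < Ld := by rw [hLd]; positivity
  have hLG0 : 0 < LG := lt_of_lt_of_le hLd0 hLG
  have hα0 : ∀ k, 0 < α k := fun k => lt_of_lt_of_le (by positivity) (hα k).1
  have hαLd : ∀ k, α k * Ld ≤ 1 := by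
    intro k
    have := (hα k).2
    rw [le_div_iff₀ hLd0] at this
    linarith
  have hαLG : ∀ k, 1 / α k ≤ LG := by
    intro k
    rw [div_le_iff₀ (hα0 k)]
    have h1 := (hα k).1
    rw [div_le_iff₀ hLG0] at h1
    nlinarith [hα0 k]
  have hRd0 : 0 ≤ Rd := hRd ▸ norm_nonneg _
  -- membership facts
  have hxsK : xstar ∈ Kstar := by
    have := hxstar; rw [hXstar] at this; exact this.1
  have hdxs : d xstar = fstar := by
    have := hxstar; rw [hXstar] at this; exact this.2
  have hKsmem : ∀ z ∈ Kstar, ∀ v ∈ K, 0 ≤ ⟪z, v⟫ := by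
    intro z hz; rw [hKstar] at hz; exact hz
  have hxK : ∀ k, x k ∈ Kstar := by
    intro k
    induction k with
    | zero => exact hx0K
    | succ k ih => rw [hxrec k]; exact (hprojKs _).1
  -- affine expansion of Lag in its second argument
  have hLagA : ∀ (u : EuclideanSpace ℝ (Fin n)) (a b : EuclideanSpace ℝ (Fin p)),
      Lag u b = Lag u a + ⟪b - a, -(G u) - g⟫ := by
    intro u a b
    rw [hLag, hLag, inner_sub_left]
    ring
  -- strong convexity of the Lagrangian at its minimizer
  have hL0 : ∀ (y : EuclideanSpace ℝ (Fin p)) (u : EuclideanSpace ℝ (Fin n)), u ∈ U →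
      σf / 2 * ‖u - uu y‖ ^ 2 ≤ Lag u y - Lag (uu y) y := by
    intro y u hu
    set m := uu y with hm
    have hmU : m ∈ U := (huu y).1
    have key : ∀ t : ℝ, 0 < t → t ≤ 1 →
        σf / 2 * ‖u - m‖ ^ 2 - (Lag u y - Lag m y) ≤ t * (σf / 2 * ‖u - m‖ ^ 2) := by
      intro t ht ht1
      set z := t • u + (1 - t) • m with hz
      have hzU : z ∈ U := hUcv hu hmU (le_of_lt ht) (by linarith) (by ring)
      have hf1 : f z ≤ t * f u + (1 - t) * f m - t * (1 - t) * (σf / 2 * ‖u - m‖ ^ 2) := by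
        have := hfsc.2 (Set.mem_univ u) (Set.mem_univ m) (le_of_lt ht)
          (by linarith : (0:ℝ) ≤ 1 - t) (by ring)
        simpa using this
      have hvec : -(G z) - g = t • (-(G u) - g) + (1 - t) • (-(G m) - g) := by
        rw [hz, map_add, map_smul, map_smul]
        module
      have hin : ⟪y, -(G z) - g⟫ = t * ⟪y, -(G u) - g⟫ + (1 - t) * ⟪y, -(G m) - g⟫ := by
        rw [hvec, inner_add_right, real_inner_smul_right, real_inner_smul_right]
      have hLz : Lag z y ≤ t * Lag u y + (1 - t) * Lag m y - t * (1 - t) * (σf / 2 * ‖u - m‖ ^ 2) := by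
        rw [hLag, hLag, hLag, hin]
        nlinarith [hf1]
      have hmin : Lag m y ≤ Lag z y := (huu y).2 z hzU
      have h5 : t * ((1 - t) * (σf / 2 * ‖u - m‖ ^ 2)) ≤ t * (Lag u y - Lag m y) := by nlinarith
      have h6 : (1 - t) * (σf / 2 * ‖u - m‖ ^ 2) ≤ Lag u y - Lag m y :=
        le_of_mul_le_mul_left (by linarith [h5]) ht
      nlinarith [h6]
    have := aux_nonpos (by positivity) key
    linarith
  -- descent-type lower bound for d
  have hL2 : ∀ a b : EuclideanSpace ℝ (Fin p),
      d a + ⟪-(G (uu a)) - g, b - a⟫ - Ld / 2 * ‖b - a‖ ^ 2 ≤ d b := by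
    intro a b
    have h1 : d b = Lag (uu b) a + ⟪b - a, -(G (uu b)) - g⟫ := by
      rw [hd]; exact hLagA (uu b) a b
    have h2 : d a + σf / 2 * ‖uu b - uu a‖ ^ 2 ≤ Lag (uu b) a := by
      have := hL0 a (uu b) (huu b).1
      rw [← hd a] at this
      linarith
    have h3 : ⟪b - a, -(G (uu b)) - g⟫
        = ⟪b - a, -(G (uu a)) - g⟫ + ⟪b - a, G (uu a) - G (uu b)⟫ := by
      rw [← inner_add_right]
      congr 1
      abel
    have h4 : |⟪b - a, G (uu a) - G (uu b)⟫| ≤ ‖b - a‖ * (‖G‖ * ‖uu a - uu b‖) := by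
      refine le_trans (abs_real_inner_le_norm _ _) ?_
      have : ‖G (uu a) - G (uu b)‖ ≤ ‖G‖ * ‖uu a - uu b‖ := by
        rw [← map_sub]; exact G.le_opNorm _
      exact mul_le_mul_of_nonneg_left this (norm_nonneg _)
    have h5 : ‖uu b - uu a‖ = ‖uu a - uu b‖ := norm_sub_rev _ _
    have h6 : ⟪-(G (uu a)) - g, b - a⟫ = ⟪b - a, -(G (uu a)) - g⟫ := real_inner_comm _ _
    have hquad : σf / 2 * ‖uu a - uu b‖ ^ 2 - ‖b - a‖ * (‖G‖ * ‖uu a - uu b‖)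
        + Ld / 2 * ‖b - a‖ ^ 2 ≥ 0 := by
      have hLdσ : Ld * σf = ‖G‖ ^ 2 := by rw [hLd]; field_simp
      exact aux_quad hσf hLdσ
    have h7 := abs_le.mp h4
    rw [h1, h3, h6]
    rw [h5] at h2
    linarith [h7.1]
  -- concavity-type upper bound for d
  have hL3 : ∀ a b : EuclideanSpace ℝ (Fin p),
      d b ≤ d a + ⟪-(G (uu a)) - g, b - a⟫ := by
    intro a b
    have h1 : d b ≤ Lag (uu a) b := by rw [hd]; exact (huu b).2 (uu a) (huu a).1
    have h2 : Lag (uu a) b = Lag (uu a) a + ⟪b - a, -(G (uu a)) - g⟫ := hLagA _ _ _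
    rw [real_inner_comm, ← hd a] at h2
    linarith [h1, h2.le]
  -- projection variational inequality
  have hVI : ∀ z w : EuclideanSpace ℝ (Fin p), w ∈ Kstar →
      ⟪z - projKs z, w - projKs z⟫ ≤ 0 := by
    intro z w hw
    set q := projKs z with hq
    have hqK : q ∈ Kstar := (hprojKs z).1
    have key : ∀ t : ℝ, 0 < t → t ≤ 1 →
        ⟪z - q, w - q⟫ ≤ t * (‖w - q‖ ^ 2 / 2) := by
      intro t ht ht1
      have hct : q + t • (w - q) ∈ Kstar := by
        rw [hKstar]
        intro v hv
        have e1 : ⟪q + t • (w - q), v⟫ = (1 - t) * ⟪q, v⟫ + t * ⟪w, v⟫ := by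
          rw [inner_add_left, real_inner_smul_left, inner_sub_left]
          ring
        rw [e1]
        have := hKsmem q hqK v hv
        have := hKsmem w hw v hv
        nlinarith
      have hle := (hprojKs z).2 _ hct
      rw [← hq] at hle
      have e2 : z - (q + t • (w - q)) = (z - q) - t • (w - q) := by abel
      rw [e2] at hle
      have hsq : ‖z - q‖ ^ 2 ≤ ‖(z - q) - t • (w - q)‖ ^ 2 := by
        nlinarith [hle, norm_nonneg (z - q)]
      have e3 : ‖(z - q) - t • (w - q)‖ ^ 2
          = ‖z - q‖ ^ 2 - 2 * (t * ⟪z - q, w - q⟫) + t ^ 2 * ‖w - q‖ ^ 2 := by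
        rw [norm_sub_sq_real (z - q) (t • (w - q)), real_inner_smul_right, norm_smul,
          Real.norm_eq_abs, mul_pow, sq_abs]
      rw [e3] at hsq
      have h8 : t * (2 * ⟪z - q, w - q⟫) ≤ t * (t * ‖w - q‖ ^ 2) := by nlinarith
      have h9 : 2 * ⟪z - q, w - q⟫ ≤ t * ‖w - q‖ ^ 2 := le_of_mul_le_mul_left h8 ht
      linarith
    exact aux_nonpos (by positivity) key
  -- fundamental per-step inequality of projected gradient ascent
  have hL5 : ∀ k : ℕ, ∀ z ∈ Kstar,
      d z - d (x (k + 1)) ≤ 1 / (2 * α k) * (‖z - x k‖ ^ 2 - ‖z - x (k + 1)‖ ^ 2) := by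
    intro k z hz
    have hA : 0 < α k := hα0 k
    set a := α k with ha
    set Dk := -(G (uu (x k))) - g with hDk
    set xp := x (k + 1) with hxpdef
    have hxp : xp = projKs (x k + a • Dk) := hxrec k
    have h1 : d (x k) + ⟪Dk, xp - x k⟫ - Ld / 2 * ‖xp - x k‖ ^ 2 ≤ d xp := hL2 (x k) xp
    have hLda : Ld / 2 ≤ 1 / (2 * a) := by
      rw [le_div_iff₀ (by positivity : (0:ℝ) < 2 * a)]
      nlinarith [hαLd k]
    have h1' : d (x k) + ⟪Dk, xp - x k⟫ - 1 / (2 * a) * ‖xp - x k‖ ^ 2 ≤ d xp := by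
      have := mul_le_mul_of_nonneg_right hLda (sq_nonneg ‖xp - x k‖)
      linarith
    have h2 : d z ≤ d (x k) + ⟪Dk, z - x k⟫ := hL3 (x k) z
    have h3 := hVI (x k + a • Dk) z hz
    rw [← hxp] at h3
    have e4 : (x k + a • Dk) - xp = (x k - xp) + a • Dk := by abel
    rw [e4, inner_add_left, real_inner_smul_left] at h3
    have e7 : ⟪x k - xp, z - xp⟫ = -⟪z - xp, xp - x k⟫ := by
      rw [real_inner_comm, show x k - xp = -(xp - x k) from by abel, inner_neg_right]
    rw [e7] at h3
    have e5 : ⟪Dk, z - x k⟫ = ⟪Dk, z - xp⟫ + ⟪Dk, xp - x k⟫ := by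
      rw [← inner_add_right]
      congr 1
      abel
    have e6 : ‖z - x k‖ ^ 2 = ‖z - xp‖ ^ 2 + 2 * ⟪z - xp, xp - x k⟫ + ‖xp - x k‖ ^ 2 := by
      rw [show z - x k = (z - xp) + (xp - x k) from by abel, norm_add_sq_real]
    have hP : ⟪Dk, z - xp⟫ ≤ 1 / a * ⟪z - xp, xp - x k⟫ := by
      rw [div_mul_eq_mul_div, le_div_iff₀ hA]
      nlinarith [h3]
    have efin : 1 / (2 * a) * (‖z - x k‖ ^ 2 - ‖z - xp‖ ^ 2)
        = 1 / a * ⟪z - xp, xp - x k⟫ + 1 / (2 * a) * ‖xp - x k‖ ^ 2 := by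
      rw [e6]
      field_simp
      ring
    rw [efin]
    linarith [h1', h2, e5, hP]
  -- d is bounded above by fstar on Kstar
  have hLagstar : ∀ z ∈ Kstar, Lag ustar z ≤ fstar := by
    intro z hz
    rw [hLag, hfstar]
    have e1 : ⟪z, -(G ustar) - g⟫ = -⟪z, G ustar + g⟫ := by
      rw [show -(G ustar) - g = -(G ustar + g) from by abel, inner_neg_right]
    rw [e1]
    have := hKsmem z hz _ hustar.2.1
    linarith
  have hdle : ∀ z ∈ Kstar, d z ≤ fstar := by
    intro z hz
    have h1 : d z ≤ Lag ustar z := by rw [hd]; exact (huu z).2 ustar hustar.1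
    exact le_trans h1 (hLagstar z hz)
  -- monotonicity of d along the iterates
  have hmono : ∀ k, d (x k) ≤ d (x (k + 1)) := by
    intro k
    have h1 := hL5 k (x k) (hxK k)
    have h2 : ‖x k - x k‖ = 0 := by simp
    rw [h2] at h1
    have h3 : 0 ≤ ‖x k - x (k + 1)‖ ^ 2 := sq_nonneg _
    have h5 : (0:ℝ) < 1 / (2 * α k) := by have := hα0 k; positivity
    nlinarith [h1, mul_nonneg h5.le h3]
  have hmono' : ∀ i j : ℕ, i ≤ j → d (x i) ≤ d (x j) := by
    intro i j hij
    induction j with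
    | zero => simp_all
    | succ j ih =>
      rcases Nat.lt_or_ge i (j + 1) with h | h
      · exact le_trans (ih (Nat.lt_succ_iff.mp h)) (hmono j)
      · have : i = j + 1 := le_antisymm hij h
        rw [this]
  -- Fejér monotonicity
  have hfej : ∀ k, ‖xstar - x (k + 1)‖ ^ 2 ≤ ‖xstar - x k‖ ^ 2 := by
    intro k
    have h1 := hL5 k xstar hxsK
    rw [hdxs] at h1
    have h2 : 0 ≤ fstar - d (x (k + 1)) := by linarith [hdle (x (k + 1)) (hxK (k + 1))]
    have h5 : (0:ℝ) < 1 / (2 * α k) := by have := hα0 k; positivity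
    nlinarith [h1, h2, h5]
  have hskR : ∀ k, ‖xstar - x k‖ ^ 2 ≤ Rd ^ 2 := by
    intro k
    induction k with
    | zero =>
      rw [hRd, norm_sub_rev]
    | succ k ih => exact le_trans (hfej k) ih
  -- the rate for the dual objective
  have hrate0 : ∀ k : ℕ, (k : ℝ) * (fstar - d (x k))
      ≤ LG / 2 * (‖xstar - x 0‖ ^ 2 - ‖xstar - x k‖ ^ 2) := by
    intro k
    induction k with
    | zero => simp
    | succ k ih =>
      have h1 := hL5 k xstar hxsK
      rw [hdxs] at h1
      have h2 : 1 / (2 * α k) ≤ LG / 2 := by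
        have := hαLG k
        have h4 : 0 < α k := hα0 k
        rw [show 1 / (2 * α k) = (1 / α k) / 2 from by field_simp]
        linarith
      have h3 : 0 ≤ ‖xstar - x k‖ ^ 2 - ‖xstar - x (k + 1)‖ ^ 2 := by
        linarith [hfej k]
      have h5 : fstar - d (x (k + 1)) ≤ LG / 2 * (‖xstar - x k‖ ^ 2 - ‖xstar - x (k + 1)‖ ^ 2) := by
        calc fstar - d (x (k + 1)) ≤ 1 / (2 * α k) * (‖xstar - x k‖ ^ 2 - ‖xstar - x (k + 1)‖ ^ 2) := h1
        _ ≤ LG / 2 * (‖xstar - x k‖ ^ 2 - ‖xstar - x (k + 1)‖ ^ 2) :=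
            mul_le_mul_of_nonneg_right h2 h3
      have h6 : d (x k) ≤ d (x (k + 1)) := hmono k
      have h7 : (0:ℝ) ≤ (k : ℝ) := Nat.cast_nonneg k
      push_cast
      nlinarith [ih, h5, h6, h7]
  have hrate : ∀ k : ℕ, 1 ≤ k → fstar - d (x k) ≤ LG * Rd ^ 2 / (2 * k) := by
    intro k hk
    have hkR : (0:ℝ) < (k : ℝ) := by exact_mod_cast Nat.pos_of_ne_zero (by omega)
    have h1 := hrate0 k
    have h2 : ‖xstar - x 0‖ ^ 2 = Rd ^ 2 := by rw [norm_sub_rev, ← hRd]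
    have h3 : 0 ≤ ‖xstar - x k‖ ^ 2 := sq_nonneg _
    rw [h2] at h1
    rw [le_div_iff₀ (by positivity : (0:ℝ) < 2 * (k:ℝ))]
    nlinarith [h1, mul_nonneg hLG0.le h3]
  -- final bounds
  intro k hk
  have hkR : (0:ℝ) < (k:ℝ) := by exact_mod_cast Nat.pos_of_ne_zero (by omega)
  have hukU : uu (x k) ∈ U := (huu (x k)).1
  have hgap1 : σf / 2 * ‖uu (x k) - ustar‖ ^ 2 ≤ fstar - d (x k) := by
    have h1 := hL0 (x k) ustar hustar.1
    rw [← hd (x k)] at h1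
    have h2 : Lag ustar (x k) ≤ fstar := hLagstar (x k) (hxK k)
    rw [norm_sub_rev (uu (x k)) ustar]
    linarith
  have hgap2 : fstar - d (x k) ≤ LG * Rd ^ 2 / (2 * k) := hrate k hk
  have hek2 : ‖uu (x k) - ustar‖ ^ 2 ≤ LG * Rd ^ 2 / ((k : ℝ) * σf) := by
    have h3 : σf / 2 * ‖uu (x k) - ustar‖ ^ 2 ≤ LG * Rd ^ 2 / (2 * k) := le_trans hgap1 hgap2
    rw [le_div_iff₀ (by positivity : (0:ℝ) < 2 * (k:ℝ))] at h3
    rw [le_div_iff₀ (by positivity : (0:ℝ) < (k:ℝ) * σf)]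
    nlinarith [h3]
  have hGe : ‖G‖ * ‖uu (x k) - ustar‖ ≤ LG * Rd / Real.sqrt k := by
    refine aux_sq_le (by positivity) ?_
    have hsq : (LG * Rd / Real.sqrt k) ^ 2 = LG ^ 2 * Rd ^ 2 / k := by
      rw [div_pow, mul_pow, Real.sq_sqrt (le_of_lt hkR)]
    rw [hsq, mul_pow]
    have hGsq : ‖G‖ ^ 2 ≤ LG * σf := by
      have h5 : ‖G‖ ^ 2 = Ld * σf := by rw [hLd]; field_simp
      nlinarith [hLG, hσf]
    calc ‖G‖ ^ 2 * ‖uu (x k) - ustar‖ ^ 2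
        ≤ (LG * σf) * (LG * Rd ^ 2 / ((k : ℝ) * σf)) :=
          mul_le_mul hGsq hek2 (sq_nonneg _) (by positivity)
      _ = LG ^ 2 * Rd ^ 2 / k := by field_simp
  have hB0 : 0 ≤ LG * Rd / Real.sqrt (k : ℝ) := by positivity
  refine ⟨?_, ?_, ?_⟩
  · refine aux_sq_le (Real.sqrt_nonneg _) ?_
    rw [Real.sq_sqrt (by positivity : (0:ℝ) ≤ 8 * LG * Rd ^ 2 / ((k:ℝ) * σf))]
    calc ‖uu (x k) - ustar‖ ^ 2 ≤ LG * Rd ^ 2 / ((k : ℝ) * σf) := hek2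
      _ ≤ 8 * LG * Rd ^ 2 / ((k : ℝ) * σf) := by
          gcongr
          nlinarith [mul_nonneg hLG0.le (sq_nonneg Rd)]
  · have h1 : Metric.infDist (G (uu (x k)) + g) K ≤ dist (G (uu (x k)) + g) (G ustar + g) :=
      Metric.infDist_le_dist_of_mem hustar.2.1
    have h2 : dist (G (uu (x k)) + g) (G ustar + g) = ‖G (uu (x k) - ustar)‖ := by
      rw [dist_eq_norm, map_sub]
      congr 1
      abel
    have h3 : ‖G (uu (x k) - ustar)‖ ≤ ‖G‖ * ‖uu (x k) - ustar‖ := G.le_opNorm _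
    have h4 : LG * Rd / Real.sqrt k ≤ 3 * LG * Rd / Real.sqrt k := by
      gcongr
      nlinarith [mul_nonneg hLG0.le hRd0]
    rw [h2] at h1
    linarith
  · have hup : f (uu (x k)) - fstar ≤ ⟪x k, G (uu (x k)) - G ustar⟫ := by
      have h1 := (huu (x k)).2 ustar hustar.1
      rw [hLag, hLag] at h1
      have e1 : ⟪x k, -(G ustar) - g⟫ - ⟪x k, -(G (uu (x k))) - g⟫
          = ⟪x k, G (uu (x k)) - G ustar⟫ := by
        rw [← inner_sub_right]
        congr 1
        abel
      rw [hfstar]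
      linarith [h1, e1.le, e1.ge]
    have hupb : ⟪x k, G (uu (x k)) - G ustar⟫ ≤ ‖x k‖ * (‖G‖ * ‖uu (x k) - ustar‖) := by
      refine le_trans (le_abs_self _) (le_trans (abs_real_inner_le_norm _ _) ?_)
      have h5 : ‖G (uu (x k)) - G ustar‖ ≤ ‖G‖ * ‖uu (x k) - ustar‖ := by
        rw [← map_sub]
        exact G.le_opNorm _
      exact mul_le_mul_of_nonneg_left h5 (norm_nonneg _)
    have hlow : fstar - f (uu (x k)) ≤ ⟪xstar, G ustar - G (uu (x k))⟫ := by
      have h1 : Lag (uu xstar) xstar ≤ Lag (uu (x k)) xstar := (huu xstar).2 _ hukU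
      rw [← hd xstar, hdxs, hLag] at h1
      have e2 : ⟪xstar, -(G (uu (x k))) - g⟫
          = ⟪xstar, G ustar - G (uu (x k))⟫ + ⟪xstar, -(G ustar) - g⟫ := by
        rw [← inner_add_right]
        congr 1
        abel
      have e3 : ⟪xstar, -(G ustar) - g⟫ ≤ 0 := by
        rw [show -(G ustar) - g = -(G ustar + g) from by abel, inner_neg_right]
        linarith [hKsmem xstar hxsK _ hustar.2.1]
      rw [e2] at h1
      linarith [h1]
    have hlowb : ⟪xstar, G ustar - G (uu (x k))⟫ ≤ ‖xstar‖ * (‖G‖ * ‖uu (x k) - ustar‖) := by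
      refine le_trans (le_abs_self _) (le_trans (abs_real_inner_le_norm _ _) ?_)
      have h5 : ‖G ustar - G (uu (x k))‖ ≤ ‖G‖ * ‖uu (x k) - ustar‖ := by
        rw [← map_sub, ← norm_neg, ← map_neg]
        refine le_trans (G.le_opNorm _) ?_
        rw [show -(ustar - uu (x k)) = uu (x k) - ustar from by abel]
      exact mul_le_mul_of_nonneg_left h5 (norm_nonneg _)
    have hxsnorm : ‖xstar‖ ≤ Rd + ‖x 0‖ := by
      calc ‖xstar‖ = ‖(xstar - x 0) + x 0‖ := by rw [sub_add_cancel]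
        _ ≤ ‖xstar - x 0‖ + ‖x 0‖ := norm_add_le _ _
        _ = Rd + ‖x 0‖ := by rw [norm_sub_rev, ← hRd]
    have hxknorm : ‖x k‖ ≤ 2 * Rd + ‖x 0‖ := by
      have h1 : ‖x k - xstar‖ ≤ Rd := by
        rw [norm_sub_rev]
        exact aux_sq_le hRd0 (hskR k)
      calc ‖x k‖ = ‖(x k - xstar) + xstar‖ := by rw [sub_add_cancel]
        _ ≤ ‖x k - xstar‖ + ‖xstar‖ := norm_add_le _ _
        _ ≤ Rd + (Rd + ‖x 0‖) := add_le_add h1 hxsnorm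
        _ = 2 * Rd + ‖x 0‖ := by ring
    have hup2 : f (uu (x k)) - fstar ≤ (2 * Rd + ‖x 0‖) * (LG * Rd / Real.sqrt k) := by
      calc f (uu (x k)) - fstar ≤ ‖x k‖ * (‖G‖ * ‖uu (x k) - ustar‖) := le_trans hup hupb
        _ ≤ (2 * Rd + ‖x 0‖) * (LG * Rd / Real.sqrt k) :=
            mul_le_mul hxknorm hGe (by positivity) (by positivity)
    have hlow2 : fstar - f (uu (x k)) ≤ (Rd + ‖x 0‖) * (LG * Rd / Real.sqrt k) := by
      calc fstar - f (uu (x k)) ≤ ‖xstar‖ * (‖G‖ * ‖uu (x k) - ustar‖) := le_trans hlow hlowb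
        _ ≤ (Rd + ‖x 0‖) * (LG * Rd / Real.sqrt k) :=
            mul_le_mul hxsnorm hGe (by positivity) (by positivity)
    have hBe : (6 * Rd + 3 * ‖x 0‖) * LG * Rd / Real.sqrt (k:ℝ)
        = (6 * Rd + 3 * ‖x 0‖) * (LG * Rd / Real.sqrt (k:ℝ)) := by ring
    have hc1 : (2 * Rd + ‖x 0‖) * (LG * Rd / Real.sqrt (k:ℝ))
        ≤ (6 * Rd + 3 * ‖x 0‖) * (LG * Rd / Real.sqrt (k:ℝ)) :=
      mul_le_mul_of_nonneg_right (by linarith [norm_nonneg (x 0)]) hB0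
    have hc2 : (Rd + ‖x 0‖) * (LG * Rd / Real.sqrt (k:ℝ))
        ≤ (6 * Rd + 3 * ‖x 0‖) * (LG * Rd / Real.sqrt (k:ℝ)) :=
      mul_le_mul_of_nonneg_right (by linarith [norm_nonneg (x 0)]) hB0
    rw [abs_le, hBe]
    constructor
    · linarith [hlow2, hc2]
    · linarith [hup2, hc1]
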